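/- If a seed Σ contains an oriented cycle 1 → 2 → ⋯ → ℓ → 1 in Γ(B), then the product x'₁⋯x'_ℓ of exchanged cluster variables can be written as Σ_{K ⊊ {1,…,ℓ}} f_K(x₁,…,x_n)·∏_{k ∈ K} x'_k for some polynomials f_K ∈ ZP[x₁,…,x_n]; in particular, each product u_j v_{j⁺} and each of u₁⋯u_ℓ, v₁⋯v_ℓ, where u_j = M_j⁻/x_j and v_j = M_j⁺/x_j are the two terms of the exchange relation divided by x_j, is a Laurent monomial with no negative exponents. -/

import Mathlib

open MvPolynomial

/-- The image of the variable `xᵢ` in the field of rational functions over `R`. -/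
noncomputable def Xfrac (R : Type*) [CommRing R] [IsDomain R] (n : ℕ) (i : Fin n) :
    FractionRing (MvPolynomial (Fin n) R) :=
  algebraMap (MvPolynomial (Fin n) R) _ (MvPolynomial.X i)

section CombPart
open Finset

section Comb
variable {ℓ : ℕ} [NeZero ℓ] {F : Type*} [CommRing F]

open Fin.NatCast in
lemma succ_closed_eq_univ {S : Finset (Fin ℓ)} (hne : S.Nonempty) (h : ∀ j ∈ S, j + 1 ∈ S) :
    S = Finset.univ := by
  obtain ⟨s₀, hs₀⟩ := hne
  have key : ∀ m : ℕ, s₀ + (m : Fin ℓ) ∈ S := by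
    intro m
    induction m with
    | zero => simpa using hs₀
    | succ k ih =>
        have := h _ ih
        rwa [add_assoc, ← Nat.cast_one (R := Fin ℓ), ← Nat.cast_add] at this
  ext i
  simp only [Finset.mem_univ, iff_true]
  have := key (i - s₀).val
  rwa [Fin.cast_val_eq_self, add_sub_cancel] at this

lemma aux_sum {α : Type*} [DecidableEq α] {D : Finset α} (hD : D ≠ ∅) :
    ∑ E ∈ D.powerset.filter (fun E => E ≠ ∅), (-1 : F) ^ (E.card + 1) = 1 := by
  have h0 : ∑ E ∈ D.powerset, (-1 : F) ^ E.card = 0 := by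
    have := Finset.sum_powerset_neg_one_pow_card (x := D)
    rw [if_neg hD] at this
    have := congrArg (Int.cast : ℤ → F) this
    push_cast at this
    simpa using this
  have hsplit := Finset.sum_filter_add_sum_filter_not D.powerset (fun E => E = ∅)
    (fun E => (-1 : F) ^ E.card)
  have h1 : D.powerset.filter (fun E => E = ∅) = {∅} := by
    ext E
    simp [Finset.mem_filter, Finset.mem_powerset]
    rintro rfl; exact Finset.empty_subset _
  rw [h1, Finset.sum_singleton, h0] at hsplit
  have h2 : ∑ E ∈ D.powerset.filter (fun E => ¬ E = ∅), (-1 : F) ^ E.card = -1 := by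
    have := hsplit; simp only [Finset.card_empty, pow_zero] at this; linear_combination this
  calc ∑ E ∈ D.powerset.filter (fun E => E ≠ ∅), (-1 : F) ^ (E.card + 1)
      = ∑ E ∈ D.powerset.filter (fun E => ¬ E = ∅), (-1 : F) ^ E.card * (-1) := by
        refine Finset.sum_congr rfl fun E _ => by ring
    _ = 1 := by rw [← Finset.sum_mul, h2]; ring

end Comb

section Star
variable {ℓ : ℕ} [NeZero ℓ] {F : Type*} [CommRing F]

lemma starExpand (U V : Fin ℓ → F) :
    ∏ j, (U j + V j)
      = ∏ j, U j + ∏ j, V j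
        + ∑ E ∈ univ.filter (fun E : Finset (Fin ℓ) => E.Nonempty ∧ ∀ j ∈ E, j + 1 ∉ E),
            (-1 : F) ^ (E.card + 1) *
              ((∏ j ∈ E, U j * V (j + 1)) * ∏ k ∈ (E ∪ E.image (· + 1))ᶜ, (U k + V k)) := by
  classical
  set W : Finset (Fin ℓ) → F := fun S => (∏ j ∈ S, U j) * ∏ j ∈ Sᶜ, V j with hWdef
  -- Step A : expand each summand
  have expand : ∀ E ∈ univ.filter (fun E : Finset (Fin ℓ) => E.Nonempty ∧ ∀ j ∈ E, j + 1 ∉ E),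
      (-1 : F) ^ (E.card + 1) *
          ((∏ j ∈ E, U j * V (j + 1)) * ∏ k ∈ (E ∪ E.image (· + 1))ᶜ, (U k + V k))
      = ∑ T ∈ ((E ∪ E.image (· + 1))ᶜ).powerset, (-1 : F) ^ (E.card + 1) * W (E ∪ T) := by
    intro E hE
    rw [Finset.mem_filter] at hE
    obtain ⟨-, hEne, hEgood⟩ := hE
    have himgE : ∀ a ∈ E.image (· + 1), a ∉ E := by
      intro a ha
      rw [Finset.mem_image] at ha
      obtain ⟨j, hj, rfl⟩ := ha
      exact hEgood j hj
    rw [Finset.prod_add, Finset.mul_sum, Finset.mul_sum]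
    refine Finset.sum_congr rfl fun T hT => ?_
    rw [Finset.mem_powerset] at hT
    have hTE : ∀ a ∈ T, a ∉ E := by
      intro a ha hc
      have := hT ha
      rw [Finset.mem_compl] at this
      exact this (Finset.mem_union_left _ hc)
    have hTimg : ∀ a ∈ T, a ∉ E.image (· + 1) := by
      intro a ha hc
      have := hT ha
      rw [Finset.mem_compl] at this
      exact this (Finset.mem_union_right _ hc)
    have hdisjET : Disjoint E T := Finset.disjoint_right.2 hTE
    have hcompl : (E ∪ T)ᶜ = E.image (· + 1) ∪ ((E ∪ E.image (· + 1))ᶜ \ T) := by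
      ext a
      simp only [Finset.mem_compl, Finset.mem_union, Finset.mem_sdiff]
      constructor
      · rintro h
        push_neg at h
        by_cases hi : a ∈ E.image (· + 1)
        · exact Or.inl hi
        · exact Or.inr ⟨fun hc => by
            rcases hc with h1 | h1
            exacts [h.1 h1, hi h1], h.2⟩
      · rintro (h | ⟨h1, h2⟩)
        · push_neg
          exact ⟨himgE a h, fun hc => hTimg a hc h⟩
        · push_neg
          exact ⟨fun hc => h1 (Or.inl hc), h2⟩
    have hdisj2 : Disjoint (E.image (· + 1)) ((E ∪ E.image (· + 1))ᶜ \ T) := by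
      refine Finset.disjoint_left.2 fun a ha hc => ?_
      rw [Finset.mem_sdiff, Finset.mem_compl] at hc
      exact hc.1 (Finset.mem_union_right _ ha)
    have hprodE : ∏ j ∈ E, U j * V (j + 1) = (∏ j ∈ E, U j) * ∏ a ∈ E.image (· + 1), V a := by
      rw [Finset.prod_mul_distrib, Finset.prod_image]
      intro x _ y _ h
      exact add_right_cancel h
    rw [hWdef]
    simp only []
    rw [Finset.prod_union hdisjET, hcompl, Finset.prod_union hdisj2, hprodE]
    ring
  rw [Finset.sum_congr rfl expand]
  -- LHS expansion
  have hLHS : ∏ j, (U j + V j) = ∑ S ∈ (univ : Finset (Finset (Fin ℓ))), W S := by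
    rw [Finset.prod_add, Finset.powerset_univ]
    refine Finset.sum_congr rfl fun S _ => ?_
    rw [hWdef]
    simp only []
    rw [← Finset.compl_eq_univ_sdiff]
  -- the sigma reindexing
  have hbig : ∑ E ∈ univ.filter (fun E : Finset (Fin ℓ) => E.Nonempty ∧ ∀ j ∈ E, j + 1 ∉ E),
      ∑ T ∈ ((E ∪ E.image (· + 1))ᶜ).powerset, (-1 : F) ^ (E.card + 1) * W (E ∪ T)
      = ∑ S ∈ (univ : Finset (Finset (Fin ℓ))),
          (if S.filter (fun j => j + 1 ∉ S) = ∅ then 0 else W S) := by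
    have hstep : ∑ S ∈ (univ : Finset (Finset (Fin ℓ))),
        (if S.filter (fun j => j + 1 ∉ S) = ∅ then 0 else W S)
        = ∑ S ∈ (univ : Finset (Finset (Fin ℓ))),
            ∑ E ∈ (S.filter (fun j => j + 1 ∉ S)).powerset.filter (fun E => E ≠ ∅),
              (-1 : F) ^ (E.card + 1) * W S := by
      refine Finset.sum_congr rfl fun S _ => ?_
      by_cases hDS : S.filter (fun j => j + 1 ∉ S) = ∅
      · rw [if_pos hDS, hDS]
        simp [Finset.filter_singleton]
      · rw [if_neg hDS]
        calc W S = (∑ E ∈ (S.filter (fun j => j + 1 ∉ S)).powerset.filter (fun E => E ≠ ∅),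
              (-1 : F) ^ (E.card + 1)) * W S := by rw [aux_sum hDS, one_mul]
          _ = _ := Finset.sum_mul _ _ _
    rw [hstep, Finset.sum_sigma', Finset.sum_sigma']
    refine Finset.sum_nbij' (fun p => ⟨p.1 ∪ p.2, p.1⟩) (fun p => ⟨p.2, p.1 \ p.2⟩) ?_ ?_ ?_ ?_ ?_
    · rintro ⟨E, T⟩ hp
      rw [Finset.mem_sigma, Finset.mem_filter, Finset.mem_powerset] at hp
      obtain ⟨⟨-, hEne, hEgood⟩, hT⟩ := hp
      rw [Finset.mem_sigma, Finset.mem_filter, Finset.mem_powerset]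
      refine ⟨Finset.mem_univ _, ?_, ?_⟩
      · intro j hj
        rw [Finset.mem_filter]
        refine ⟨Finset.mem_union_left _ hj, ?_⟩
        intro hc
        rcases Finset.mem_union.1 hc with h1 | h1
        · exact hEgood j hj h1
        · have := hT h1
          rw [Finset.mem_compl] at this
          exact this (Finset.mem_union_right _ (Finset.mem_image_of_mem _ hj))
      · exact Finset.nonempty_iff_ne_empty.1 hEne
    · rintro ⟨S, E⟩ hp
      rw [Finset.mem_sigma, Finset.mem_filter, Finset.mem_powerset] at hp
      obtain ⟨-, hE, hEne⟩ := hp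
      have hES : ∀ j ∈ E, j ∈ S ∧ j + 1 ∉ S := by
        intro j hj
        have := hE hj
        rw [Finset.mem_filter] at this
        exact this
      rw [Finset.mem_sigma, Finset.mem_filter, Finset.mem_powerset]
      refine ⟨⟨Finset.mem_univ _, Finset.nonempty_iff_ne_empty.2 hEne, ?_⟩, ?_⟩
      · intro j hj hc
        exact (hES j hj).2 ((hES _ hc).1)
      · intro a ha
        rw [Finset.mem_sdiff] at ha
        rw [Finset.mem_compl]
        intro hc
        rcases Finset.mem_union.1 hc with h1 | h1
        · exact ha.2 h1
        · rw [Finset.mem_image] at h1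
          obtain ⟨j, hj, rfl⟩ := h1
          exact (hES j hj).2 ha.1
    · rintro ⟨E, T⟩ hp
      rw [Finset.mem_sigma, Finset.mem_filter, Finset.mem_powerset] at hp
      obtain ⟨⟨-, hEne, hEgood⟩, hT⟩ := hp
      have hdisj : Disjoint E T := by
        refine Finset.disjoint_left.2 fun a ha hc => ?_
        have := hT hc
        rw [Finset.mem_compl] at this
        exact this (Finset.mem_union_left _ ha)
      have : (E ∪ T) \ E = T := Finset.union_sdiff_cancel_left hdisj
      simp only [this]
    · rintro ⟨S, E⟩ hp
      rw [Finset.mem_sigma, Finset.mem_filter, Finset.mem_powerset] at hp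
      obtain ⟨-, hE, -⟩ := hp
      have hES : E ⊆ S := hE.trans (Finset.filter_subset _ _)
      have : E ∪ S \ E = S := Finset.union_sdiff_of_subset hES
      simp only [this]
    · rintro ⟨E, T⟩ _
      rfl
  rw [hLHS, hbig]
  -- split off ∅ and univ
  have hsplit : ∑ S ∈ (univ : Finset (Finset (Fin ℓ))), W S
      = ∑ S ∈ (univ : Finset (Finset (Fin ℓ))),
          ((if S.filter (fun j => j + 1 ∉ S) = ∅ then W S else 0)
            + (if S.filter (fun j => j + 1 ∉ S) = ∅ then 0 else W S)) := by
    refine Finset.sum_congr rfl fun S _ => ?_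
    by_cases h : S.filter (fun j => j + 1 ∉ S) = ∅ <;> simp [h]
  rw [hsplit, Finset.sum_add_distrib]
  have hfilt : (univ : Finset (Finset (Fin ℓ))).filter
      (fun S => S.filter (fun j => j + 1 ∉ S) = ∅) = {∅, univ} := by
    ext S
    simp only [Finset.mem_filter, Finset.mem_univ, true_and, Finset.mem_insert,
      Finset.mem_singleton]
    constructor
    · intro h
      rcases Finset.eq_empty_or_nonempty S with h0 | h0
      · exact Or.inl h0
      · refine Or.inr (succ_closed_eq_univ h0 fun j hj => ?_)
        by_contra hc
        have : j ∈ S.filter (fun j => j + 1 ∉ S) := Finset.mem_filter.2 ⟨hj, hc⟩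
        rw [h] at this
        exact absurd this (Finset.notMem_empty _)
    · rintro (rfl | rfl)
      · simp
      · rw [Finset.filter_eq_empty_iff]
        intro j _
        simp
  have h1 : ∑ S ∈ (univ : Finset (Finset (Fin ℓ))),
      (if S.filter (fun j => j + 1 ∉ S) = ∅ then W S else 0) = ∏ j, U j + ∏ j, V j := by
    have hne : (∅ : Finset (Fin ℓ)) ≠ univ :=
      Ne.symm (Finset.nonempty_iff_ne_empty.1 Finset.univ_nonempty)
    rw [← Finset.sum_filter, hfilt, Finset.sum_pair hne, hWdef]
    simp [add_comm]
  rw [h1]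

end Star

section Main
variable {ℓ : ℕ} [NeZero ℓ] {F : Type*} [CommRing F]

lemma mainComb (U V : Fin ℓ → F) :
    ∏ j, (U j + V j)
      = ∑ K ∈ univ.filter (fun K : Finset (Fin ℓ) => K ≠ univ),
          ((if K = ∅ then (∏ j, U j + ∏ j, V j) else 0)
            + ∑ E ∈ (univ.filter
                  (fun E : Finset (Fin ℓ) => E.Nonempty ∧ ∀ j ∈ E, j + 1 ∉ E)).filter
                  (fun E => (E ∪ E.image (· + 1))ᶜ = K),
                (-1 : F) ^ (E.card + 1) * ∏ j ∈ E, U j * V (j + 1))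
          * ∏ k ∈ K, (U k + V k) := by
  classical
  have hne : (∅ : Finset (Fin ℓ)) ≠ univ :=
    Ne.symm (Finset.nonempty_iff_ne_empty.1 Finset.univ_nonempty)
  have hmemEmpty : (∅ : Finset (Fin ℓ)) ∈ univ.filter (fun K : Finset (Fin ℓ) => K ≠ univ) :=
    Finset.mem_filter.2 ⟨Finset.mem_univ _, hne⟩
  -- distribute
  have hdistrib : ∀ K : Finset (Fin ℓ),
      ((if K = ∅ then (∏ j, U j + ∏ j, V j) else 0)
        + ∑ E ∈ (univ.filter
              (fun E : Finset (Fin ℓ) => E.Nonempty ∧ ∀ j ∈ E, j + 1 ∉ E)).filter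
              (fun E => (E ∪ E.image (· + 1))ᶜ = K),
            (-1 : F) ^ (E.card + 1) * ∏ j ∈ E, U j * V (j + 1))
      * ∏ k ∈ K, (U k + V k)
      = (if K = ∅ then (∏ j, U j + ∏ j, V j) else 0) * ∏ k ∈ K, (U k + V k)
        + ∑ E ∈ (univ.filter
              (fun E : Finset (Fin ℓ) => E.Nonempty ∧ ∀ j ∈ E, j + 1 ∉ E)).filter
              (fun E => (E ∪ E.image (· + 1))ᶜ = K),
            (-1 : F) ^ (E.card + 1) *
              ((∏ j ∈ E, U j * V (j + 1)) * ∏ k ∈ (E ∪ E.image (· + 1))ᶜ, (U k + V k)) := by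
    intro K
    rw [add_mul, Finset.sum_mul]
    congr 1
    refine Finset.sum_congr rfl fun E hE => ?_
    rw [Finset.mem_filter] at hE
    rw [hE.2, mul_assoc]
  rw [Finset.sum_congr rfl fun K _ => hdistrib K, Finset.sum_add_distrib]
  -- first piece
  have hfirst : ∑ K ∈ univ.filter (fun K : Finset (Fin ℓ) => K ≠ univ),
      (if K = ∅ then (∏ j, U j + ∏ j, V j) else 0) * ∏ k ∈ K, (U k + V k)
      = ∏ j, U j + ∏ j, V j := by
    rw [Finset.sum_eq_single_of_mem ∅ hmemEmpty]
    · simp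
    · intro K _ hK
      rw [if_neg hK, zero_mul]
  -- second piece: fiberwise sum
  have hsecond : ∑ K ∈ univ.filter (fun K : Finset (Fin ℓ) => K ≠ univ),
      ∑ E ∈ (univ.filter
            (fun E : Finset (Fin ℓ) => E.Nonempty ∧ ∀ j ∈ E, j + 1 ∉ E)).filter
            (fun E => (E ∪ E.image (· + 1))ᶜ = K),
          (-1 : F) ^ (E.card + 1) *
            ((∏ j ∈ E, U j * V (j + 1)) * ∏ k ∈ (E ∪ E.image (· + 1))ᶜ, (U k + V k))
      = ∑ E ∈ univ.filter (fun E : Finset (Fin ℓ) => E.Nonempty ∧ ∀ j ∈ E, j + 1 ∉ E),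
          (-1 : F) ^ (E.card + 1) *
            ((∏ j ∈ E, U j * V (j + 1)) * ∏ k ∈ (E ∪ E.image (· + 1))ᶜ, (U k + V k)) := by
    refine Finset.sum_fiberwise_of_maps_to ?_ _
    intro E hE
    rw [Finset.mem_filter] at hE
    obtain ⟨-, hEne, -⟩ := hE
    rw [Finset.mem_filter]
    refine ⟨Finset.mem_univ _, ?_⟩
    obtain ⟨j, hj⟩ := hEne
    intro hc
    have : j ∈ (E ∪ E.image (· + 1))ᶜ := hc ▸ Finset.mem_univ j
    rw [Finset.mem_compl] at this
    exact this (Finset.mem_union_left _ hj)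
  rw [hfirst, hsecond, starExpand]

end Main

end CombPart



section Alg
variable (R : Type*) [CommRing R] [IsDomain R] (n : ℕ)

lemma Xfrac_ne_zero (i : Fin n) : Xfrac R n i ≠ 0 := by
  have hX : (X i : MvPolynomial (Fin n) R) ≠ 0 := X_ne_zero i
  simpa [Xfrac] using
    (IsFractionRing.to_map_eq_zero_iff (K := FractionRing (MvPolynomial (Fin n) R))).not.2 hX

lemma prodXpow (s : Finset (Fin n)) (d : Fin n → ℕ) :
    (∏ i ∈ s, (X i : MvPolynomial (Fin n) R) ^ d i)
      = monomial (∑ i ∈ s, Finsupp.single i (d i)) 1 := by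
  classical
  induction s using Finset.induction_on with
  | empty => simp
  | @insert a s ha ih =>
      rw [Finset.prod_insert ha, Finset.sum_insert ha, ih, X_pow_eq_monomial, monomial_mul,
        one_mul]

lemma mono_div (r : R) (c d : Fin n → ℕ) (h : ∀ i, d i ≤ c i) :
    ∃ e : Fin n →₀ ℕ,
      algebraMap R (FractionRing (MvPolynomial (Fin n) R)) r * (∏ i, Xfrac R n i ^ c i)
          / (∏ i, Xfrac R n i ^ d i)
        = algebraMap (MvPolynomial (Fin n) R) (FractionRing (MvPolynomial (Fin n) R))
            (monomial e r) := by
  classical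
  set F := FractionRing (MvPolynomial (Fin n) R)
  set φ := algebraMap (MvPolynomial (Fin n) R) F with hφ
  refine ⟨∑ i, Finsupp.single i (c i - d i), ?_⟩
  have hXf : ∀ (e : Fin n → ℕ), (∏ i, Xfrac R n i ^ e i) = φ (∏ i, (X i : MvPolynomial (Fin n) R) ^ e i) := by
    intro e
    rw [map_prod]
    exact Finset.prod_congr rfl fun i _ => by rw [map_pow]; rfl
  have hD : (∏ i, Xfrac R n i ^ d i) ≠ 0 := by
    refine Finset.prod_ne_zero_iff.2 fun i _ => pow_ne_zero _ (Xfrac_ne_zero R n i)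
  have hsplit : (∏ i, Xfrac R n i ^ c i)
      = (∏ i, Xfrac R n i ^ (c i - d i)) * ∏ i, Xfrac R n i ^ d i := by
    rw [← Finset.prod_mul_distrib]
    exact Finset.prod_congr rfl fun i _ => by rw [← pow_add, Nat.sub_add_cancel (h i)]
  rw [hsplit, ← mul_assoc, mul_div_cancel_right₀ _ hD, hXf,
    IsScalarTower.algebraMap_apply R (MvPolynomial (Fin n) R) F, algebraMap_eq, ← hφ, ← map_mul,
    prodXpow, C_mul_monomial, mul_one]

end Alg

section ExtraHelpers
variable (R : Type*) [CommRing R] [IsDomain R] (n : ℕ)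

lemma Xfrac_single (b : Fin n) :
    ∏ i, Xfrac R n i ^ (if i = b then 1 else 0) = Xfrac R n b := by
  classical
  have h1 : ∀ i : Fin n, Xfrac R n i ^ (if i = b then 1 else 0)
      = (if i = b then Xfrac R n i else 1) := by
    intro i
    split <;> simp
  rw [Finset.prod_congr rfl fun i _ => h1 i]
  simp [Finset.prod_ite_eq']

lemma prod_castLE {ℓ : ℕ} (hℓn : ℓ ≤ n) :
    ∏ j : Fin ℓ, Xfrac R n (Fin.castLE hℓn j)
      = ∏ i, Xfrac R n i ^ (if (i : ℕ) < ℓ then 1 else 0) := by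
  classical
  have himg : Finset.univ.image (Fin.castLE hℓn)
      = Finset.univ.filter (fun i : Fin n => (i : ℕ) < ℓ) := by
    ext i
    constructor
    · intro hi
      obtain ⟨j, -, rfl⟩ := Finset.mem_image.1 hi
      exact Finset.mem_filter.2 ⟨Finset.mem_univ _, j.isLt⟩
    · intro hi
      have h := (Finset.mem_filter.1 hi).2
      exact Finset.mem_image.2 ⟨⟨(i : ℕ), h⟩, Finset.mem_univ _, by ext; rfl⟩
  have h2 : ∀ i : Fin n, Xfrac R n i ^ (if (i : ℕ) < ℓ then 1 else 0)
      = (if (i : ℕ) < ℓ then Xfrac R n i else 1) := by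
    intro i
    split <;> simp
  rw [Finset.prod_congr rfl fun i _ => h2 i, ← Finset.prod_filter, ← himg,
    Finset.prod_image]
  intro x _ y _ h
  exact Fin.castLE_injective hℓn h

end ExtraHelpers

/-- If the directed graph of a seed contains the oriented cycle `1 → 2 → ⋯ → ℓ → 1`,
then the product `x'₁ ⋯ x'_ℓ` of exchanged cluster variables is a combination
`Σ_{K ⊊ [1,ℓ]} f_K(x₁,…,x_n) ∏_{k∈K} x'_k` with polynomial coefficients; moreover each
`u_j v_{j⁺}` and each of `u₁⋯u_ℓ`, `v₁⋯v_ℓ` (where `u_j = M_j⁻/x_j`, `v_j = M_j⁺/x_j`)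
is a monomial with no negative exponents. -/
theorem cycle_product_expansion (R : Type*) [CommRing R] [IsDomain R]
    (n ℓ : ℕ) [NeZero ℓ] (hℓ : 2 ≤ ℓ) (hℓn : ℓ ≤ n)
    (B : Matrix (Fin n) (Fin n) ℤ)
    (hsss : ∀ i j, (B i j = 0 ∧ B j i = 0) ∨ B i j * B j i < 0)
    (pp pm : Fin n → Rˣ)
    (hcycle : ∀ j : Fin ℓ, 0 < B (Fin.castLE hℓn j) (Fin.castLE hℓn (j + 1))) :
    letI F := FractionRing (MvPolynomial (Fin n) R)
    let X : Fin n → F := Xfrac R n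
    let a : R → F := algebraMap R F
    let Mp : Fin n → F := fun j => a (pp j : R) * ∏ i, X i ^ (B i j).toNat
    let Mm : Fin n → F := fun j => a (pm j : R) * ∏ i, X i ^ (-(B i j)).toNat
    let x' : Fin n → F := fun j => (Mp j + Mm j) / X j
    let u : Fin ℓ → F := fun j => Mm (Fin.castLE hℓn j) / X (Fin.castLE hℓn j)
    let v : Fin ℓ → F := fun j => Mp (Fin.castLE hℓn j) / X (Fin.castLE hℓn j)
    (∃ f : Finset (Fin ℓ) → MvPolynomial (Fin n) R,
      ∏ j : Fin ℓ, x' (Fin.castLE hℓn j) =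
        ∑ K ∈ Finset.univ.filter (fun K : Finset (Fin ℓ) => K ≠ Finset.univ),
          algebraMap (MvPolynomial (Fin n) R) F (f K) *
            ∏ k ∈ K, x' (Fin.castLE hℓn k)) ∧
    (∀ j : Fin ℓ, ∃ (e : Fin n →₀ ℕ) (r : R),
      u j * v (j + 1) = algebraMap (MvPolynomial (Fin n) R) F (monomial e r)) ∧
    (∃ (e : Fin n →₀ ℕ) (r : R),
      ∏ j, u j = algebraMap (MvPolynomial (Fin n) R) F (monomial e r)) ∧
    (∃ (e : Fin n →₀ ℕ) (r : R),
      ∏ j, v j = algebraMap (MvPolynomial (Fin n) R) F (monomial e r)) := by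
  classical
  intro X a Mp Mm x' u v
  have hX : X = Xfrac R n := rfl
  have ha : a = algebraMap R (FractionRing (MvPolynomial (Fin n) R)) := rfl
  have hBneg : ∀ j : Fin ℓ,
      B (Fin.castLE hℓn (j + 1)) (Fin.castLE hℓn j) < 0 := by
    intro j
    have hBjk := hcycle j
    rcases hsss (Fin.castLE hℓn j) (Fin.castLE hℓn (j + 1)) with ⟨h1, -⟩ | h
    · omega
    · nlinarith
  -- Part 2 : u j * v (j+1) is a monomial
  have part2 : ∀ j : Fin ℓ, ∃ (e : Fin n →₀ ℕ) (r : R),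
      u j * v (j + 1) = algebraMap (MvPolynomial (Fin n) R) (FractionRing (MvPolynomial (Fin n) R)) (monomial e r) := by
    intro j
    have hBjk : 0 < B (Fin.castLE hℓn j) (Fin.castLE hℓn (j + 1)) := hcycle j
    have hBkj := hBneg j
    have hne : Fin.castLE hℓn j ≠ Fin.castLE hℓn (j + 1) := by
      intro hcon
      rw [hcon] at hBjk
      rw [hcon] at hBkj
      omega
    have hdc : ∀ i : Fin n,
        ((if i = Fin.castLE hℓn j then 1 else 0)
          + (if i = Fin.castLE hℓn (j + 1) then 1 else 0))
        ≤ ((-(B i (Fin.castLE hℓn j))).toNat + (B i (Fin.castLE hℓn (j + 1))).toNat) := by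
      intro i
      by_cases h1 : i = Fin.castLE hℓn j
      · subst h1
        rw [if_pos rfl, if_neg hne]
        omega
      · rw [if_neg h1]
        by_cases h2 : i = Fin.castLE hℓn (j + 1)
        · subst h2
          rw [if_pos rfl]
          omega
        · rw [if_neg h2]
          omega
    obtain ⟨e, he⟩ := mono_div R n
      ((pm (Fin.castLE hℓn j) : R) * (pp (Fin.castLE hℓn (j + 1)) : R))
      (fun i => (-(B i (Fin.castLE hℓn j))).toNat + (B i (Fin.castLE hℓn (j + 1))).toNat)
      (fun i => (if i = Fin.castLE hℓn j then 1 else 0)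
        + (if i = Fin.castLE hℓn (j + 1) then 1 else 0)) hdc
    refine ⟨e, (pm (Fin.castLE hℓn j) : R) * (pp (Fin.castLE hℓn (j + 1)) : R), ?_⟩
    rw [← he]
    show Mm (Fin.castLE hℓn j) / X (Fin.castLE hℓn j)
        * (Mp (Fin.castLE hℓn (j + 1)) / X (Fin.castLE hℓn (j + 1))) = _
    rw [div_mul_div_comm]
    have hnum : Mm (Fin.castLE hℓn j) * Mp (Fin.castLE hℓn (j + 1))
        = algebraMap R (FractionRing (MvPolynomial (Fin n) R)) ((pm (Fin.castLE hℓn j) : R) * (pp (Fin.castLE hℓn (j + 1)) : R))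
          * ∏ i, Xfrac R n i ^
            ((-(B i (Fin.castLE hℓn j))).toNat + (B i (Fin.castLE hℓn (j + 1))).toNat) := by
      show (a _ * ∏ i, X i ^ _) * (a _ * ∏ i, X i ^ _) = _
      rw [ha, hX, map_mul, mul_mul_mul_comm, ← Finset.prod_mul_distrib]
      congr 1
      exact Finset.prod_congr rfl fun i _ => (pow_add _ _ _).symm
    have hden : X (Fin.castLE hℓn j) * X (Fin.castLE hℓn (j + 1))
        = ∏ i, Xfrac R n i ^
            ((if i = Fin.castLE hℓn j then 1 else 0)
              + (if i = Fin.castLE hℓn (j + 1) then 1 else 0)) := by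
      rw [hX]
      rw [show (∏ i, Xfrac R n i ^
            ((if i = Fin.castLE hℓn j then 1 else 0)
              + (if i = Fin.castLE hℓn (j + 1) then 1 else 0)))
          = (∏ i, Xfrac R n i ^ (if i = Fin.castLE hℓn j then 1 else 0))
            * ∏ i, Xfrac R n i ^ (if i = Fin.castLE hℓn (j + 1) then 1 else 0) by
        rw [← Finset.prod_mul_distrib]
        exact Finset.prod_congr rfl fun i _ => pow_add _ _ _]
      rw [Xfrac_single, Xfrac_single]
    rw [hnum, hden]
  -- Part 3 : ∏ u is a monomial
  have part3 : ∃ (e : Fin n →₀ ℕ) (r : R),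
      ∏ j, u j = algebraMap (MvPolynomial (Fin n) R) (FractionRing (MvPolynomial (Fin n) R)) (monomial e r) := by
    have hdc : ∀ i : Fin n, (if (i : ℕ) < ℓ then 1 else 0)
        ≤ ∑ j : Fin ℓ, (-(B i (Fin.castLE hℓn j))).toNat := by
      intro i
      by_cases h : (i : ℕ) < ℓ
      · rw [if_pos h]
        set k : Fin ℓ := ⟨(i : ℕ), h⟩ with hk
        have hik : Fin.castLE hℓn k = i := by ext; rfl
        have hterm : 1 ≤ (-(B i (Fin.castLE hℓn (k - 1)))).toNat := by
          have hb := hBneg (k - 1)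
          rw [sub_add_cancel, hik] at hb
          omega
        calc (1 : ℕ) ≤ (-(B i (Fin.castLE hℓn (k - 1)))).toNat := hterm
          _ ≤ ∑ j : Fin ℓ, (-(B i (Fin.castLE hℓn j))).toNat :=
            Finset.single_le_sum (f := fun j : Fin ℓ => (-(B i (Fin.castLE hℓn j))).toNat)
              (fun j _ => Nat.zero_le _) (Finset.mem_univ (k - 1))
      · rw [if_neg h]
        exact Nat.zero_le _
    obtain ⟨e, he⟩ := mono_div R n (∏ j : Fin ℓ, (pm (Fin.castLE hℓn j) : R))
      (fun i => ∑ j : Fin ℓ, (-(B i (Fin.castLE hℓn j))).toNat)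
      (fun i => if (i : ℕ) < ℓ then 1 else 0) hdc
    refine ⟨e, ∏ j : Fin ℓ, (pm (Fin.castLE hℓn j) : R), ?_⟩
    rw [← he]
    show ∏ j : Fin ℓ, Mm (Fin.castLE hℓn j) / X (Fin.castLE hℓn j) = _
    rw [Finset.prod_div_distrib]
    have hnum : ∏ j : Fin ℓ, Mm (Fin.castLE hℓn j)
        = algebraMap R (FractionRing (MvPolynomial (Fin n) R)) (∏ j : Fin ℓ, (pm (Fin.castLE hℓn j) : R))
          * ∏ i, Xfrac R n i ^ (∑ j : Fin ℓ, (-(B i (Fin.castLE hℓn j))).toNat) := by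
      show ∏ j : Fin ℓ, (a _ * ∏ i, X i ^ _) = _
      rw [ha, hX, Finset.prod_mul_distrib, map_prod, Finset.prod_comm]
      congr 1
      exact Finset.prod_congr rfl fun i _ => Finset.prod_pow_eq_pow_sum _ _ _
    have hden : ∏ j : Fin ℓ, X (Fin.castLE hℓn j)
        = ∏ i, Xfrac R n i ^ (if (i : ℕ) < ℓ then 1 else 0) := by
      rw [hX]
      exact prod_castLE R n hℓn
    rw [hnum, hden]
  -- Part 4 : ∏ v is a monomial
  have part4 : ∃ (e : Fin n →₀ ℕ) (r : R),
      ∏ j, v j = algebraMap (MvPolynomial (Fin n) R) (FractionRing (MvPolynomial (Fin n) R)) (monomial e r) := by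
    have hdc : ∀ i : Fin n, (if (i : ℕ) < ℓ then 1 else 0)
        ≤ ∑ j : Fin ℓ, (B i (Fin.castLE hℓn j)).toNat := by
      intro i
      by_cases h : (i : ℕ) < ℓ
      · rw [if_pos h]
        set k : Fin ℓ := ⟨(i : ℕ), h⟩ with hk
        have hik : Fin.castLE hℓn k = i := by ext; rfl
        have hterm : 1 ≤ (B i (Fin.castLE hℓn (k + 1))).toNat := by
          have hb := hcycle k
          rw [hik] at hb
          omega
        calc (1 : ℕ) ≤ (B i (Fin.castLE hℓn (k + 1))).toNat := hterm
          _ ≤ ∑ j : Fin ℓ, (B i (Fin.castLE hℓn j)).toNat :=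
            Finset.single_le_sum (f := fun j : Fin ℓ => (B i (Fin.castLE hℓn j)).toNat)
              (fun j _ => Nat.zero_le _) (Finset.mem_univ (k + 1))
      · rw [if_neg h]
        exact Nat.zero_le _
    obtain ⟨e, he⟩ := mono_div R n (∏ j : Fin ℓ, (pp (Fin.castLE hℓn j) : R))
      (fun i => ∑ j : Fin ℓ, (B i (Fin.castLE hℓn j)).toNat)
      (fun i => if (i : ℕ) < ℓ then 1 else 0) hdc
    refine ⟨e, ∏ j : Fin ℓ, (pp (Fin.castLE hℓn j) : R), ?_⟩
    rw [← he]
    show ∏ j : Fin ℓ, Mp (Fin.castLE hℓn j) / X (Fin.castLE hℓn j) = _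
    rw [Finset.prod_div_distrib]
    have hnum : ∏ j : Fin ℓ, Mp (Fin.castLE hℓn j)
        = algebraMap R (FractionRing (MvPolynomial (Fin n) R)) (∏ j : Fin ℓ, (pp (Fin.castLE hℓn j) : R))
          * ∏ i, Xfrac R n i ^ (∑ j : Fin ℓ, (B i (Fin.castLE hℓn j)).toNat) := by
      show ∏ j : Fin ℓ, (a _ * ∏ i, X i ^ _) = _
      rw [ha, hX, Finset.prod_mul_distrib, map_prod, Finset.prod_comm]
      congr 1
      exact Finset.prod_congr rfl fun i _ => Finset.prod_pow_eq_pow_sum _ _ _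
    have hden : ∏ j : Fin ℓ, X (Fin.castLE hℓn j)
        = ∏ i, Xfrac R n i ^ (if (i : ℕ) < ℓ then 1 else 0) := by
      rw [hX]
      exact prod_castLE R n hℓn
    rw [hnum, hden]
  -- Part 1 : the expansion
  have part1 : ∃ f : Finset (Fin ℓ) → MvPolynomial (Fin n) R,
      ∏ j : Fin ℓ, x' (Fin.castLE hℓn j) =
        ∑ K ∈ Finset.univ.filter (fun K : Finset (Fin ℓ) => K ≠ Finset.univ),
          algebraMap (MvPolynomial (Fin n) R) (FractionRing (MvPolynomial (Fin n) R)) (f K) *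
            ∏ k ∈ K, x' (Fin.castLE hℓn k) := by
    have hxuv : ∀ j : Fin ℓ, x' (Fin.castLE hℓn j) = u j + v j := by
      intro j
      show (Mp (Fin.castLE hℓn j) + Mm (Fin.castLE hℓn j)) / X (Fin.castLE hℓn j)
          = Mm (Fin.castLE hℓn j) / X (Fin.castLE hℓn j)
            + Mp (Fin.castLE hℓn j) / X (Fin.castLE hℓn j)
      rw [add_div, add_comm]
    set Rng := (algebraMap (MvPolynomial (Fin n) R) (FractionRing (MvPolynomial (Fin n) R))).range with hRng
    have hcmem : ∀ K : Finset (Fin ℓ),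
        ((if K = ∅ then (∏ j, u j + ∏ j, v j) else 0)
          + ∑ E ∈ (Finset.univ.filter
                (fun E : Finset (Fin ℓ) => E.Nonempty ∧ ∀ j ∈ E, j + 1 ∉ E)).filter
                (fun E => (E ∪ E.image (· + 1))ᶜ = K),
              (-1 : FractionRing (MvPolynomial (Fin n) R)) ^ (E.card + 1) * ∏ j ∈ E, u j * v (j + 1)) ∈ Rng := by
      intro K
      refine Subring.add_mem _ ?_ ?_
      · split
        · obtain ⟨e3, r3, h3⟩ := part3
          obtain ⟨e4, r4, h4⟩ := part4
          rw [h3, h4]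
          exact Subring.add_mem _ ⟨monomial e3 r3, rfl⟩ ⟨monomial e4 r4, rfl⟩
        · exact Subring.zero_mem _
      · refine Subring.sum_mem _ fun E _ => ?_
        refine Subring.mul_mem _ (Subring.pow_mem _ (Subring.neg_mem _ (Subring.one_mem _)) _) ?_
        refine Subring.prod_mem _ fun j _ => ?_
        obtain ⟨e2, r2, h2⟩ := part2 j
        rw [h2]
        exact ⟨monomial e2 r2, rfl⟩
    choose f hf using fun K => RingHom.mem_range.1 (hcmem K)
    refine ⟨f, ?_⟩
    calc ∏ j : Fin ℓ, x' (Fin.castLE hℓn j) = ∏ j : Fin ℓ, (u j + v j) :=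
          Finset.prod_congr rfl fun j _ => hxuv j
      _ = ∑ K ∈ Finset.univ.filter (fun K : Finset (Fin ℓ) => K ≠ Finset.univ),
            ((if K = ∅ then (∏ j, u j + ∏ j, v j) else 0)
              + ∑ E ∈ (Finset.univ.filter
                    (fun E : Finset (Fin ℓ) => E.Nonempty ∧ ∀ j ∈ E, j + 1 ∉ E)).filter
                    (fun E => (E ∪ E.image (· + 1))ᶜ = K),
                  (-1 : FractionRing (MvPolynomial (Fin n) R)) ^ (E.card + 1) * ∏ j ∈ E, u j * v (j + 1))
            * ∏ k ∈ K, (u k + v k) := mainComb u v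
      _ = ∑ K ∈ Finset.univ.filter (fun K : Finset (Fin ℓ) => K ≠ Finset.univ),
            algebraMap (MvPolynomial (Fin n) R) (FractionRing (MvPolynomial (Fin n) R)) (f K) * ∏ k ∈ K, x' (Fin.castLE hℓn k) := by
          refine Finset.sum_congr rfl fun K _ => ?_
          rw [hf K]
          congr 1
          exact Finset.prod_congr rfl fun k _ => (hxuv k).symm
  exact ⟨part1, part2, part3, part4⟩
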